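/- Let r ≥ 1, δ ≥ 0, Φ(t) = t^r (1 + log⁺ t)^δ, a > 1, and b_k = 1/Φ(a^{-k}) for k ∈ ℤ. Let v be an A₁ weight, k, ℓ ∈ ℤ with ℓ ≥ k, and define v_k(x) = min{v(x)^r, b_{k+1}}. If Q is a cube satisfying a^ℓ/[v]_{A₁} ≤ ess inf_Q v, then b_k/[v]_{A₁}^r ≤ (1/|Q|) ∫_Q v_k(x) dx ≤ b_{k+1}. -/

import Mathlib

open MeasureTheory Filter ENNReal

noncomputable section

/-- The half-open axis-parallel cube with lower corner `c` and side length `h`. -/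
def cube {n : ℕ} (c : Fin n → ℝ) (h : ℝ) : Set (Fin n → ℝ) :=
  Set.univ.pi fun i => Set.Ico (c i) (c i + h)

/-- The average of `g` over the set `Q`. -/
def avg {n : ℕ} (Q : Set (Fin n → ℝ)) (g : (Fin n → ℝ) → ℝ) : ℝ :=
  (volume Q).toReal⁻¹ * ∫ y in Q, g y

/-- `w` is an `A₁` Muckenhoupt weight: a locally integrable, a.e. positive function whose
average over every axis-parallel cube is controlled by its essential infimum there. -/
def IsA1 {n : ℕ} (w : (Fin n → ℝ) → ℝ) : Prop :=
  LocallyIntegrable w volume ∧ (∀ᵐ x ∂(volume : Measure (Fin n → ℝ)), 0 < w x) ∧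
    ∃ C > 0, ∀ (c : Fin n → ℝ) (h : ℝ), 0 < h →
      avg (cube c h) w ≤ C * essInf w (volume.restrict (cube c h))

/-- The `A₁` constant `[w]_{A₁}` of a weight. -/
def A1const {n : ℕ} (w : (Fin n → ℝ) → ℝ) : ℝ :=
  sInf {C : ℝ | 0 < C ∧ ∀ (c : Fin n → ℝ) (h : ℝ), 0 < h →
    avg (cube c h) w ≤ C * essInf w (volume.restrict (cube c h))}

/-- The function `Φ(t) = t^r (1 + log⁺ t)^δ`. -/
def phi (r δ t : ℝ) : ℝ := t ^ r * (1 + max 0 (Real.log t)) ^ δ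

/-- `b_k = 1 / Φ(a^{-k})`. -/
def bk (r δ a : ℝ) (k : ℤ) : ℝ := 1 / phi r δ (a ^ (-k))

/-- `Φ` is a Young function: convex, increasing, vanishing at `0`, tending to `∞`. -/
def IsYoung (Φ : ℝ → ℝ) : Prop :=
  ConvexOn ℝ (Set.Ici 0) Φ ∧ MonotoneOn Φ (Set.Ici 0) ∧ Φ 0 = 0 ∧
    Tendsto Φ atTop atTop

/-- The Luxemburg average `‖f‖_{Φ,Q}` (with value `∞` if no admissible `λ` exists). -/
def eLuxNorm {n : ℕ} (Φ : ℝ → ℝ) (f : (Fin n → ℝ) → ℝ) (Q : Set (Fin n → ℝ)) : ℝ≥0∞ :=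
  sInf (ENNReal.ofReal '' {l : ℝ | 0 < l ∧
    ∫⁻ y in Q, ENNReal.ofReal (Φ (|f y| / l)) ≤ volume Q})

/-- The Orlicz maximal operator `M_Φ`, a supremum over all cubes containing `x`. -/
def maxOrlicz {n : ℕ} (Φ : ℝ → ℝ) (f : (Fin n → ℝ) → ℝ) (x : Fin n → ℝ) : ℝ≥0∞ :=
  sSup {r : ℝ≥0∞ | ∃ (c : Fin n → ℝ) (h : ℝ), 0 < h ∧ x ∈ cube c h ∧
    r = eLuxNorm Φ f (cube c h)}

/-- The Hardy–Littlewood maximal operator over axis-parallel cubes. -/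
def maxHL {n : ℕ} (f : (Fin n → ℝ) → ℝ) (x : Fin n → ℝ) : ℝ≥0∞ :=
  sSup {r : ℝ≥0∞ | ∃ (c : Fin n → ℝ) (h : ℝ), 0 < h ∧ x ∈ cube c h ∧
    r = ENNReal.ofReal (avg (cube c h) fun y => |f y|)}

/-- `M_r f = M(|f|^r)^{1/r}`. -/
def maxR {n : ℕ} (r : ℝ) (f : (Fin n → ℝ) → ℝ) (x : Fin n → ℝ) : ℝ≥0∞ :=
  maxHL (fun y => |f y| ^ r) x ^ (1 / r)

/-- A dyadic grid: its cubes are recorded as pairs (lower corner `c`, scale `k`), the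
corresponding cube being `cube c (2^k)`.  Any two cubes of the grid are nested or
disjoint, and for each scale `k` the cubes of that scale partition `ℝⁿ`. -/
structure DyadicGrid (n : ℕ) where
  cubes : Set ((Fin n → ℝ) × ℤ)
  nested : ∀ p ∈ cubes, ∀ q ∈ cubes,
    (cube p.1 ((2:ℝ) ^ p.2) ∩ cube q.1 ((2:ℝ) ^ q.2)).Nonempty →
      cube p.1 ((2:ℝ) ^ p.2) ⊆ cube q.1 ((2:ℝ) ^ q.2) ∨
        cube q.1 ((2:ℝ) ^ q.2) ⊆ cube p.1 ((2:ℝ) ^ p.2)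
  partition : ∀ (k : ℤ) (x : Fin n → ℝ), ∃! c : Fin n → ℝ,
    (c, k) ∈ cubes ∧ x ∈ cube c ((2:ℝ) ^ k)

/-- The dyadic Orlicz maximal operator `M_{Φ,D}`. -/
def maxOrliczD {n : ℕ} (D : DyadicGrid n) (Φ : ℝ → ℝ) (f : (Fin n → ℝ) → ℝ)
    (x : Fin n → ℝ) : ℝ≥0∞ :=
  sSup {r : ℝ≥0∞ | ∃ p ∈ D.cubes, x ∈ cube p.1 ((2:ℝ) ^ p.2) ∧
    r = eLuxNorm Φ f (cube p.1 ((2:ℝ) ^ p.2))}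

/-- The dyadic Hardy–Littlewood maximal operator `M_D`. -/
def maxD {n : ℕ} (D : DyadicGrid n) (v : (Fin n → ℝ) → ℝ) (x : Fin n → ℝ) : ℝ≥0∞ :=
  sSup {r : ℝ≥0∞ | ∃ p ∈ D.cubes, x ∈ cube p.1 ((2:ℝ) ^ p.2) ∧
    r = ENNReal.ofReal (avg (cube p.1 ((2:ℝ) ^ p.2)) v)}

/-- `w ∈ A_q`, `1 < q < ∞`. -/
def IsAq {n : ℕ} (w : (Fin n → ℝ) → ℝ) (q : ℝ) : Prop :=
  LocallyIntegrable w volume ∧ (∀ᵐ x ∂(volume : Measure (Fin n → ℝ)), 0 < w x) ∧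
    ∃ C > 0, ∀ (c : Fin n → ℝ) (h : ℝ), 0 < h →
      avg (cube c h) w * avg (cube c h) (fun x => w x ^ (1 - q / (q - 1))) ^ (q - 1) ≤ C



section helperLemmas

variable {n : ℕ}

lemma cube_volume (c : Fin n → ℝ) {h : ℝ} (hh : 0 < h) :
    volume (cube c h) = ENNReal.ofReal h ^ n := by
  rw [cube, volume_pi_pi]
  simp [Real.volume_Ico]

lemma cube_vol_pos (c : Fin n → ℝ) {h : ℝ} (hh : 0 < h) : 0 < volume (cube c h) := by
  rw [cube_volume c hh]
  exact ENNReal.pow_pos (ENNReal.ofReal_pos.mpr hh) n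

lemma cube_vol_lt_top (c : Fin n → ℝ) {h : ℝ} (hh : 0 < h) : volume (cube c h) < ⊤ := by
  rw [cube_volume c hh]
  exact ENNReal.pow_lt_top ENNReal.ofReal_lt_top

lemma integrableOn_cube {v : (Fin n → ℝ) → ℝ} (hv : LocallyIntegrable v volume)
    (c : Fin n → ℝ) (h : ℝ) : IntegrableOn v (cube c h) volume := by
  refine (hv.integrableOn_isCompact (isCompact_Icc (a := c) (b := fun i => c i + h))).mono_set ?_
  intro x hx
  rw [← Set.pi_univ_Icc]
  exact fun i _ => ⟨(hx i trivial).1, (hx i trivial).2.le⟩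

lemma ae_essInf_le_cube {v : (Fin n → ℝ) → ℝ}
    (hpos : ∀ᵐ x ∂(volume : Measure (Fin n → ℝ)), 0 < v x) (c : Fin n → ℝ) (h : ℝ) :
    ∀ᵐ x ∂(volume.restrict (cube c h)),
      essInf v (volume.restrict (cube c h)) ≤ v x := by
  refine ae_essInf_le ?_
  refine ⟨0, ?_⟩
  rw [Filter.eventually_map]
  filter_upwards [ae_restrict_of_ae hpos] with x hx using hx.le

lemma essInf_le_avg {v : (Fin n → ℝ) → ℝ} (hloc : LocallyIntegrable v volume)
    (hpos : ∀ᵐ x ∂(volume : Measure (Fin n → ℝ)), 0 < v x)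
    (c : Fin n → ℝ) {h : ℝ} (hh : 0 < h) :
    essInf v (volume.restrict (cube c h)) ≤ avg (cube c h) v := by
  set Q := cube c h with hQ
  set I := essInf v (volume.restrict Q) with hI
  haveI : Fact (volume Q < ⊤) := ⟨cube_vol_lt_top c hh⟩
  have hT : 0 < (volume Q).toReal :=
    ENNReal.toReal_pos (cube_vol_pos c hh).ne' (cube_vol_lt_top c hh).ne
  have h1 : ∫ _x in Q, I ≤ ∫ x in Q, v x :=
    integral_mono_ae (integrable_const I) (integrableOn_cube hloc c h)
      (ae_essInf_le_cube hpos c h)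
  rw [setIntegral_const, smul_eq_mul] at h1
  rw [avg]
  calc I = (volume Q).toReal⁻¹ * ((volume Q).toReal * I) := by field_simp
    _ ≤ (volume Q).toReal⁻¹ * ∫ x in Q, v x := by
        exact mul_le_mul_of_nonneg_left h1 (inv_nonneg.mpr hT.le)

lemma avg_pos_cube {v : (Fin n → ℝ) → ℝ} (hloc : LocallyIntegrable v volume)
    (hpos : ∀ᵐ x ∂(volume : Measure (Fin n → ℝ)), 0 < v x)
    (c : Fin n → ℝ) {h : ℝ} (hh : 0 < h) : 0 < avg (cube c h) v := by
  set Q := cube c h with hQ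
  have hT : 0 < (volume Q).toReal :=
    ENNReal.toReal_pos (cube_vol_pos c hh).ne' (cube_vol_lt_top c hh).ne
  have hint : 0 < ∫ x in Q, v x := by
    rw [integral_pos_iff_support_of_nonneg_ae
      (by filter_upwards [ae_restrict_of_ae hpos] with x hx using hx.le)
      (integrableOn_cube hloc c h)]
    have hcompl : (volume.restrict Q) (Function.support v)ᶜ = 0 := by
      have h0 : (volume.restrict Q) {x | ¬ 0 < v x} = 0 :=
        ae_iff.mp (ae_restrict_of_ae hpos)
      refine measure_mono_null ?_ h0
      intro x hx
      simp only [Set.mem_compl_iff, Function.mem_support, not_not] at hx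
      simp [hx]
    have huniv : (volume.restrict Q) Set.univ ≤ (volume.restrict Q) (Function.support v) := by
      calc (volume.restrict Q) Set.univ
          = (volume.restrict Q) (Function.support v ∪ (Function.support v)ᶜ) := by
            rw [Set.union_compl_self]
        _ ≤ (volume.restrict Q) (Function.support v)
              + (volume.restrict Q) (Function.support v)ᶜ := measure_union_le _ _
        _ = (volume.restrict Q) (Function.support v) := by rw [hcompl, add_zero]
    have : 0 < (volume.restrict Q) (Function.support v) := by
      refine lt_of_lt_of_le ?_ huniv
      rw [Measure.restrict_apply_univ]
      exact cube_vol_pos c hh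
    exact this
  exact mul_pos (inv_pos.mpr hT) hint

lemma one_le_A1const {v : (Fin n → ℝ) → ℝ} (hv : IsA1 v) : 1 ≤ A1const v := by
  obtain ⟨hloc, hpos, C0, hC0, hC0'⟩ := hv
  refine le_csInf ⟨C0, hC0, hC0'⟩ ?_
  rintro C ⟨hCpos, hC⟩
  have hQ := hC 0 1 one_pos
  set I := essInf v (volume.restrict (cube (0 : Fin n → ℝ) 1)) with hIdef
  have hIA : I ≤ avg (cube (0 : Fin n → ℝ) 1) v := essInf_le_avg hloc hpos 0 one_pos
  have hApos : 0 < avg (cube (0 : Fin n → ℝ) 1) v := avg_pos_cube hloc hpos 0 one_pos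
  have hIpos : 0 < I := by nlinarith
  nlinarith

lemma phi_pos {r δ t : ℝ} (hδ : 0 ≤ δ) (ht : 0 < t) : 0 < phi r δ t := by
  have h1 : (0:ℝ) < 1 + max 0 (Real.log t) := by
    have := le_max_left (0:ℝ) (Real.log t); linarith
  exact mul_pos (Real.rpow_pos_of_pos ht r) (Real.rpow_pos_of_pos h1 δ)

lemma phi_mono {r δ : ℝ} (hr : 1 ≤ r) (hδ : 0 ≤ δ) {s t : ℝ} (hs : 0 < s) (hst : s ≤ t) :
    phi r δ s ≤ phi r δ t := by
  have h1 : (0:ℝ) < 1 + max 0 (Real.log s) := by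
    have := le_max_left (0:ℝ) (Real.log s); linarith
  refine mul_le_mul (Real.rpow_le_rpow hs.le hst (by linarith)) ?_
    (Real.rpow_nonneg h1.le δ) (Real.rpow_nonneg (le_trans hs.le hst) r)
  refine Real.rpow_le_rpow h1.le ?_ hδ
  have := Real.log_le_log hs hst
  have := le_max_left (0:ℝ) (Real.log t)
  have h2 : max 0 (Real.log s) ≤ max 0 (Real.log t) :=
    max_le_max le_rfl (Real.log_le_log hs hst)
  linarith

lemma bk_pos {r δ a : ℝ} (hδ : 0 ≤ δ) (ha : 0 < a) (k : ℤ) : 0 < bk r δ a k :=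
  div_pos one_pos (phi_pos hδ (zpow_pos ha _))

lemma bk_mono {r δ a : ℝ} (hr : 1 ≤ r) (hδ : 0 ≤ δ) (ha : 1 < a) {k m : ℤ} (hkm : k ≤ m) :
    bk r δ a k ≤ bk r δ a m := by
  have ha0 : (0:ℝ) < a := lt_trans one_pos ha
  refine one_div_le_one_div_of_le (phi_pos hδ (zpow_pos ha0 _)) ?_
  exact phi_mono hr hδ (zpow_pos ha0 _) (zpow_le_zpow_right₀ ha.le (neg_le_neg hkm))

lemma bk_le_zpow_rpow {r δ a : ℝ} (hδ : 0 ≤ δ) (ha : 0 < a) (k : ℤ) :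
    bk r δ a k ≤ (a ^ k) ^ r := by
  have hzk : (0:ℝ) < a ^ k := zpow_pos ha k
  have hznk : (0:ℝ) < a ^ (-k) := zpow_pos ha _
  have hw : (1:ℝ) ≤ (1 + max 0 (Real.log (a ^ (-k)))) ^ δ := by
    refine Real.one_le_rpow ?_ hδ
    have := le_max_left (0:ℝ) (Real.log (a ^ (-k))); linarith
  have hphi : (a ^ (-k) : ℝ) ^ r ≤ phi r δ (a ^ (-k)) := by
    rw [phi]
    exact le_mul_of_one_le_right (Real.rpow_nonneg hznk.le r) hw
  have hrp : (0:ℝ) < (a ^ (-k) : ℝ) ^ r := Real.rpow_pos_of_pos hznk r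
  have h1 : bk r δ a k ≤ 1 / ((a ^ (-k) : ℝ) ^ r) :=
    one_div_le_one_div_of_le hrp hphi
  have h2 : ((a : ℝ) ^ (-k)) ^ r = ((a ^ k : ℝ) ^ r)⁻¹ := by
    rw [zpow_neg, Real.inv_rpow hzk.le]
  rw [h2, one_div, inv_inv] at h1
  exact h1

end helperLemmas

/-- Lemma 5 of the paper. Bounds for the averages of
`v_k = min{v^r, b_{k+1}}` over the decomposition cubes. -/
theorem vk_average_bounds {n : ℕ} (r δ : ℝ) (hr : 1 ≤ r) (hδ : 0 ≤ δ)
    (a : ℝ) (ha : 1 < a) (v : (Fin n → ℝ) → ℝ) (hv : IsA1 v)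
    (k l : ℤ) (hkl : k ≤ l) (c : Fin n → ℝ) (h : ℝ) (hh : 0 < h)
    (hQ : a ^ l / A1const v ≤ essInf v (volume.restrict (cube c h))) :
    bk r δ a k / A1const v ^ r ≤
        avg (cube c h) (fun x => min (v x ^ r) (bk r δ a (k + 1))) ∧
      avg (cube c h) (fun x => min (v x ^ r) (bk r δ a (k + 1))) ≤ bk r δ a (k + 1) := by
  obtain ⟨hloc, hpos, hCex⟩ := id hv
  have ha0 : (0:ℝ) < a := lt_trans one_pos ha
  have hA1 : 1 ≤ A1const v := one_le_A1const hv
  have hA0 : (0:ℝ) < A1const v := lt_of_lt_of_le one_pos hA1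
  have hr0 : (0:ℝ) ≤ r := le_trans zero_le_one hr
  set Q := cube c h with hQdef
  set B := bk r δ a (k + 1) with hBdef
  have hBpos : 0 < B := bk_pos hδ ha0 _
  have hbkpos : 0 < bk r δ a k := bk_pos hδ ha0 k
  haveI : Fact (volume Q < ⊤) := ⟨cube_vol_lt_top c hh⟩
  have hT : 0 < (volume Q).toReal :=
    ENNReal.toReal_pos (cube_vol_pos c hh).ne' (cube_vol_lt_top c hh).ne
  have hmeas : AEStronglyMeasurable (fun x => min (v x ^ r) B) (volume.restrict Q) := by
    have hvm : AEMeasurable v (volume.restrict Q) :=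
      (hloc.aestronglyMeasurable.restrict.aemeasurable)
    exact ((hvm.pow aemeasurable_const).min aemeasurable_const).aestronglyMeasurable
  have hbound : ∀ᵐ x ∂(volume.restrict Q), ‖min (v x ^ r) B‖ ≤ B := by
    filter_upwards [ae_restrict_of_ae hpos] with x hx
    rw [Real.norm_eq_abs, abs_le]
    constructor
    · have h0 : (0:ℝ) ≤ min (v x ^ r) B :=
        le_min (Real.rpow_nonneg hx.le r) hBpos.le
      linarith
    · exact min_le_right _ _
  have hint : Integrable (fun x => min (v x ^ r) B) (volume.restrict Q) :=
    Integrable.mono' (integrable_const B) hmeas hbound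
  have hain : ∀ᵐ x ∂(volume.restrict Q),
      bk r δ a k / A1const v ^ r ≤ min (v x ^ r) B := by
    filter_upwards [ae_restrict_of_ae hpos, ae_essInf_le_cube hpos c h] with x hx hex
    have hvx : a ^ k / A1const v ≤ v x := by
      refine le_trans ?_ (le_trans hQ hex)
      gcongr
      exact ha.le
    refine le_min ?_ ?_
    · have h1 : bk r δ a k / A1const v ^ r ≤ (a ^ k : ℝ) ^ r / A1const v ^ r := by
        gcongr
        exact bk_le_zpow_rpow hδ ha0 k
      refine le_trans h1 ?_
      rw [← Real.div_rpow (zpow_pos ha0 k).le hA0.le]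
      exact Real.rpow_le_rpow (by positivity) hvx hr0
    · refine le_trans (div_le_self hbkpos.le (Real.one_le_rpow hA1 hr0)) ?_
      exact bk_mono hr hδ ha (by omega)
  constructor
  · have h1 : ∫ _x in Q, (bk r δ a k / A1const v ^ r) ≤ ∫ x in Q, min (v x ^ r) B :=
      integral_mono_ae (integrable_const _) hint hain
    rw [setIntegral_const, smul_eq_mul] at h1
    rw [avg]
    calc bk r δ a k / A1const v ^ r
        = (volume Q).toReal⁻¹ * ((volume Q).toReal * (bk r δ a k / A1const v ^ r)) := by
          field_simp
      _ ≤ (volume Q).toReal⁻¹ * ∫ x in Q, min (v x ^ r) B :=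
          mul_le_mul_of_nonneg_left h1 (inv_nonneg.mpr hT.le)
  · have h1 : ∫ x in Q, min (v x ^ r) B ≤ ∫ _x in Q, B :=
      integral_mono_ae hint (integrable_const _)
        (Filter.Eventually.of_forall fun x => min_le_right _ _)
    rw [setIntegral_const, smul_eq_mul] at h1
    rw [avg]
    calc (volume Q).toReal⁻¹ * ∫ x in Q, min (v x ^ r) B
        ≤ (volume Q).toReal⁻¹ * ((volume Q).toReal * B) :=
          mul_le_mul_of_nonneg_left h1 (inv_nonneg.mpr hT.le)
      _ = B := by field_simp


end
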